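/- arXiv:math/0602258 — 2 statements merged into one kernel-verified Lean document; each statement's English description precedes it below -/
import Mathlib

section
/- A vector c = (c_1,c_2,c_3,c_4,c_5) ∈ ℤ⁵ with c_5 = 1 and c_1 = 1 is cohomology-free if and only if c is one of the six tuples (1,1,2,1,1), (1,2,2,1,1), (1,2,3,1,1), (1,2,4,2,1), (1,3,4,2,1), (1,3,5,2,1). -/
set_option maxRecDepth 10000
set_option maxHeartbeats 1000000

/-- The primitive ray generators `l₁,…,l₇` of the fan, in counterclockwise order,
acting on `ℤ²` by the dot product. -/
def rayForm : Fin 7 → ℤ × ℤ :=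
  ![(1, -1), (2, -1), (3, -1), (1, 0), (0, 1), (-1, 2), (0, -1)]

/-- Extend `c ∈ ℤ⁵` to seven coefficients by `c₆ = c₇ = 0`. -/
def cExt (c : Fin 5 → ℤ) : Fin 7 → ℤ :=
  fun i => if h : (i : ℕ) < 5 then c ⟨i, h⟩ else 0

/-- `N_c(m) = {i : l_i(m) + c_i < 0}`. -/
def Nset (c : Fin 5 → ℤ) (m : ℤ × ℤ) : Finset (Fin 7) :=
  Finset.univ.filter fun i =>
    (rayForm i).1 * m.1 + (rayForm i).2 * m.2 + cExt c i < 0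

/-- A subset of the cyclic index set `Fin 7` is a circular interval if it is empty
or of the form `{a, a+1, …, b}` with indices taken modulo 7. -/
def IsCircularInterval (S : Finset (Fin 7)) : Prop :=
  S = ∅ ∨ ∃ (a : Fin 7) (n : ℕ),
    S = (Finset.range (n + 1)).image fun j : ℕ => a + (Fin.ofNat 7 j : Fin 7)

/-- `c ∈ ℤ⁵` is cohomology-free if for every `m ∈ ℤ²` and both `ε ∈ {1, -1}`,
the set `N_{εc}(m)` is a circular interval different from the whole index set. -/
def CohomologyFree (c : Fin 5 → ℤ) : Prop :=
  ∀ m : ℤ × ℤ, ∀ ε : ℤ, ε = 1 ∨ ε = -1 →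
    IsCircularInterval (Nset (ε • c) m) ∧ Nset (ε • c) m ≠ Finset.univ

section helpers
lemma arcChar : ∀ S : Finset (Fin 7),
    (¬ ∃ i j : Fin 7, i ≠ j ∧ i ∈ S ∧ i+1 ∉ S ∧ j ∈ S ∧ j+1 ∉ S) → S ≠ Finset.univ →
    S = ∅ ∨ ∃ a : Fin 7, ∃ n : Fin 6,
      S = (Finset.range ((n:ℕ) + 1)).image (fun j : ℕ => a + (Fin.ofNat 7 j : Fin 7)) := by decide

lemma arcNoDesc : ∀ (a : Fin 7) (n : Fin 6),
    ¬ ∃ i j : Fin 7, i ≠ j ∧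
      i ∈ ((Finset.range ((n:ℕ) + 1)).image (fun j : ℕ => a + (Fin.ofNat 7 j : Fin 7))) ∧
      i+1 ∉ ((Finset.range ((n:ℕ) + 1)).image (fun j : ℕ => a + (Fin.ofNat 7 j : Fin 7))) ∧
      j ∈ ((Finset.range ((n:ℕ) + 1)).image (fun j : ℕ => a + (Fin.ofNat 7 j : Fin 7))) ∧
      j+1 ∉ ((Finset.range ((n:ℕ) + 1)).image (fun j : ℕ => a + (Fin.ofNat 7 j : Fin 7))) := by decide

lemma img7 (a : Fin 7) : (Finset.range 7).image (fun j : ℕ => a + (Fin.ofNat 7 j : Fin 7)) = Finset.univ := by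
  revert a; decide

lemma circ_of_noDesc (S : Finset (Fin 7))
    (h1 : ¬ ∃ i j : Fin 7, i ≠ j ∧ i ∈ S ∧ i+1 ∉ S ∧ j ∈ S ∧ j+1 ∉ S)
    (h2 : S ≠ Finset.univ) : IsCircularInterval S := by
  rcases arcChar S h1 h2 with h | ⟨a, n, h⟩
  · exact Or.inl h
  · exact Or.inr ⟨a, n, h⟩

lemma noDesc_of_circ (S : Finset (Fin 7)) (h : IsCircularInterval S)
    (h2 : S ≠ Finset.univ) :
    ¬ ∃ i j : Fin 7, i ≠ j ∧ i ∈ S ∧ i+1 ∉ S ∧ j ∈ S ∧ j+1 ∉ S := by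
  rcases h with rfl | ⟨a, n, rfl⟩
  · simp
  · by_cases hn : n ≤ 5
    · exact arcNoDesc a ⟨n, by omega⟩
    · exfalso; apply h2
      have hsub : Finset.univ ⊆ (Finset.range (n + 1)).image (fun j : ℕ => a + (Fin.ofNat 7 j : Fin 7)) := by
        rw [← img7 a]
        exact Finset.image_subset_image (Finset.range_subset_range.2 (by omega))
      exact Finset.univ_subset_iff.mp hsub

lemma mem_Nset (c : Fin 5 → ℤ) (m : ℤ × ℤ) (i : Fin 7) :
    i ∈ Nset c m ↔ (rayForm i).1 * m.1 + (rayForm i).2 * m.2 + cExt c i < 0 := by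
  simp [Nset]

lemma cExt_smul (ε : ℤ) (c : Fin 5 → ℤ) (i : Fin 7) : cExt (ε • c) i = ε * cExt c i := by
  unfold cExt; split <;> simp

lemma bridge (c : Fin 5 → ℤ) (h : CohomologyFree c) (ε : ℤ) (hε : ε = 1 ∨ ε = -1)
    (m : ℤ × ℤ) (i j : Fin 7) (hij : i ≠ j) :
    ¬((rayForm i).1 * m.1 + (rayForm i).2 * m.2 + ε * cExt c i < 0 ∧
      ¬((rayForm (i+1)).1 * m.1 + (rayForm (i+1)).2 * m.2 + ε * cExt c (i+1) < 0) ∧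
      (rayForm j).1 * m.1 + (rayForm j).2 * m.2 + ε * cExt c j < 0 ∧
      ¬((rayForm (j+1)).1 * m.1 + (rayForm (j+1)).2 * m.2 + ε * cExt c (j+1) < 0)) := by
  obtain ⟨hc, hne⟩ := h m ε hε
  have hnd := noDesc_of_circ _ hc hne
  rintro ⟨a1, a2, a3, a4⟩
  exact hnd ⟨i, j, hij, (mem_Nset _ _ _).2 (by rw [cExt_smul]; exact a1),
    fun hm => a2 (by rw [← cExt_smul ε c]; exact (mem_Nset _ _ _).1 hm),
    (mem_Nset _ _ _).2 (by rw [cExt_smul]; exact a3),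
    fun hm => a4 (by rw [← cExt_smul ε c]; exact (mem_Nset _ _ _).1 hm)⟩


lemma ex_pair7 {Q : Fin 7 → Fin 7 → Prop} (h : ∃ i j : Fin 7, i ≠ j ∧ Q i j) :
    Q 0 1 ∨ Q 0 2 ∨ Q 0 3 ∨ Q 0 4 ∨ Q 0 5 ∨ Q 0 6 ∨ Q 1 0 ∨ Q 1 2 ∨ Q 1 3 ∨ Q 1 4 ∨ Q 1 5 ∨ Q 1 6 ∨ Q 2 0 ∨ Q 2 1 ∨ Q 2 3 ∨ Q 2 4 ∨ Q 2 5 ∨ Q 2 6 ∨ Q 3 0 ∨ Q 3 1 ∨ Q 3 2 ∨ Q 3 4 ∨ Q 3 5 ∨ Q 3 6 ∨ Q 4 0 ∨ Q 4 1 ∨ Q 4 2 ∨ Q 4 3 ∨ Q 4 5 ∨ Q 4 6 ∨ Q 5 0 ∨ Q 5 1 ∨ Q 5 2 ∨ Q 5 3 ∨ Q 5 4 ∨ Q 5 6 ∨ Q 6 0 ∨ Q 6 1 ∨ Q 6 2 ∨ Q 6 3 ∨ Q 6 4 ∨ Q 6 5 := by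
  obtain ⟨i, j, hij, hq⟩ := h
  fin_cases i <;> fin_cases j
  · exact absurd rfl hij
  · exact Or.inl hq
  · exact Or.inr (Or.inl hq)
  · exact Or.inr (Or.inr (Or.inl hq))
  · exact Or.inr (Or.inr (Or.inr (Or.inl hq)))
  · exact Or.inr (Or.inr (Or.inr (Or.inr (Or.inl hq))))
  · exact Or.inr (Or.inr (Or.inr (Or.inr (Or.inr (Or.inl hq)))))
  · exact Or.inr (Or.inr (Or.inr (Or.inr (Or.inr (Or.inr (Or.inl hq))))))
  · exact absurd rfl hij
  · exact Or.inr (Or.inr (Or.inr (Or.inr (Or.inr (Or.inr (Or.inr (Or.inl hq)))))))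
  · exact Or.inr (Or.inr (Or.inr (Or.inr (Or.inr (Or.inr (Or.inr (Or.inr (Or.inl hq))))))))
  · exact Or.inr (Or.inr (Or.inr (Or.inr (Or.inr (Or.inr (Or.inr (Or.inr (Or.inr (Or.inl hq)))))))))
  · exact Or.inr (Or.inr (Or.inr (Or.inr (Or.inr (Or.inr (Or.inr (Or.inr (Or.inr (Or.inr (Or.inl hq))))))))))
  · exact Or.inr (Or.inr (Or.inr (Or.inr (Or.inr (Or.inr (Or.inr (Or.inr (Or.inr (Or.inr (Or.inr (Or.inl hq)))))))))))
  · exact Or.inr (Or.inr (Or.inr (Or.inr (Or.inr (Or.inr (Or.inr (Or.inr (Or.inr (Or.inr (Or.inr (Or.inr (Or.inl hq))))))))))))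
  · exact Or.inr (Or.inr (Or.inr (Or.inr (Or.inr (Or.inr (Or.inr (Or.inr (Or.inr (Or.inr (Or.inr (Or.inr (Or.inr (Or.inl hq)))))))))))))
  · exact absurd rfl hij
  · exact Or.inr (Or.inr (Or.inr (Or.inr (Or.inr (Or.inr (Or.inr (Or.inr (Or.inr (Or.inr (Or.inr (Or.inr (Or.inr (Or.inr (Or.inl hq))))))))))))))
  · exact Or.inr (Or.inr (Or.inr (Or.inr (Or.inr (Or.inr (Or.inr (Or.inr (Or.inr (Or.inr (Or.inr (Or.inr (Or.inr (Or.inr (Or.inr (Or.inl hq)))))))))))))))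
  · exact Or.inr (Or.inr (Or.inr (Or.inr (Or.inr (Or.inr (Or.inr (Or.inr (Or.inr (Or.inr (Or.inr (Or.inr (Or.inr (Or.inr (Or.inr (Or.inr (Or.inl hq))))))))))))))))
  · exact Or.inr (Or.inr (Or.inr (Or.inr (Or.inr (Or.inr (Or.inr (Or.inr (Or.inr (Or.inr (Or.inr (Or.inr (Or.inr (Or.inr (Or.inr (Or.inr (Or.inr (Or.inl hq)))))))))))))))))
  · exact Or.inr (Or.inr (Or.inr (Or.inr (Or.inr (Or.inr (Or.inr (Or.inr (Or.inr (Or.inr (Or.inr (Or.inr (Or.inr (Or.inr (Or.inr (Or.inr (Or.inr (Or.inr (Or.inl hq))))))))))))))))))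
  · exact Or.inr (Or.inr (Or.inr (Or.inr (Or.inr (Or.inr (Or.inr (Or.inr (Or.inr (Or.inr (Or.inr (Or.inr (Or.inr (Or.inr (Or.inr (Or.inr (Or.inr (Or.inr (Or.inr (Or.inl hq)))))))))))))))))))
  · exact Or.inr (Or.inr (Or.inr (Or.inr (Or.inr (Or.inr (Or.inr (Or.inr (Or.inr (Or.inr (Or.inr (Or.inr (Or.inr (Or.inr (Or.inr (Or.inr (Or.inr (Or.inr (Or.inr (Or.inr (Or.inl hq))))))))))))))))))))
  · exact absurd rfl hij
  · exact Or.inr (Or.inr (Or.inr (Or.inr (Or.inr (Or.inr (Or.inr (Or.inr (Or.inr (Or.inr (Or.inr (Or.inr (Or.inr (Or.inr (Or.inr (Or.inr (Or.inr (Or.inr (Or.inr (Or.inr (Or.inr (Or.inl hq)))))))))))))))))))))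
  · exact Or.inr (Or.inr (Or.inr (Or.inr (Or.inr (Or.inr (Or.inr (Or.inr (Or.inr (Or.inr (Or.inr (Or.inr (Or.inr (Or.inr (Or.inr (Or.inr (Or.inr (Or.inr (Or.inr (Or.inr (Or.inr (Or.inr (Or.inl hq))))))))))))))))))))))
  · exact Or.inr (Or.inr (Or.inr (Or.inr (Or.inr (Or.inr (Or.inr (Or.inr (Or.inr (Or.inr (Or.inr (Or.inr (Or.inr (Or.inr (Or.inr (Or.inr (Or.inr (Or.inr (Or.inr (Or.inr (Or.inr (Or.inr (Or.inr (Or.inl hq)))))))))))))))))))))))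
  · exact Or.inr (Or.inr (Or.inr (Or.inr (Or.inr (Or.inr (Or.inr (Or.inr (Or.inr (Or.inr (Or.inr (Or.inr (Or.inr (Or.inr (Or.inr (Or.inr (Or.inr (Or.inr (Or.inr (Or.inr (Or.inr (Or.inr (Or.inr (Or.inr (Or.inl hq))))))))))))))))))))))))
  · exact Or.inr (Or.inr (Or.inr (Or.inr (Or.inr (Or.inr (Or.inr (Or.inr (Or.inr (Or.inr (Or.inr (Or.inr (Or.inr (Or.inr (Or.inr (Or.inr (Or.inr (Or.inr (Or.inr (Or.inr (Or.inr (Or.inr (Or.inr (Or.inr (Or.inr (Or.inl hq)))))))))))))))))))))))))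
  · exact Or.inr (Or.inr (Or.inr (Or.inr (Or.inr (Or.inr (Or.inr (Or.inr (Or.inr (Or.inr (Or.inr (Or.inr (Or.inr (Or.inr (Or.inr (Or.inr (Or.inr (Or.inr (Or.inr (Or.inr (Or.inr (Or.inr (Or.inr (Or.inr (Or.inr (Or.inr (Or.inl hq))))))))))))))))))))))))))
  · exact Or.inr (Or.inr (Or.inr (Or.inr (Or.inr (Or.inr (Or.inr (Or.inr (Or.inr (Or.inr (Or.inr (Or.inr (Or.inr (Or.inr (Or.inr (Or.inr (Or.inr (Or.inr (Or.inr (Or.inr (Or.inr (Or.inr (Or.inr (Or.inr (Or.inr (Or.inr (Or.inr (Or.inl hq)))))))))))))))))))))))))))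
  · exact absurd rfl hij
  · exact Or.inr (Or.inr (Or.inr (Or.inr (Or.inr (Or.inr (Or.inr (Or.inr (Or.inr (Or.inr (Or.inr (Or.inr (Or.inr (Or.inr (Or.inr (Or.inr (Or.inr (Or.inr (Or.inr (Or.inr (Or.inr (Or.inr (Or.inr (Or.inr (Or.inr (Or.inr (Or.inr (Or.inr (Or.inl hq))))))))))))))))))))))))))))
  · exact Or.inr (Or.inr (Or.inr (Or.inr (Or.inr (Or.inr (Or.inr (Or.inr (Or.inr (Or.inr (Or.inr (Or.inr (Or.inr (Or.inr (Or.inr (Or.inr (Or.inr (Or.inr (Or.inr (Or.inr (Or.inr (Or.inr (Or.inr (Or.inr (Or.inr (Or.inr (Or.inr (Or.inr (Or.inr (Or.inl hq)))))))))))))))))))))))))))))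
  · exact Or.inr (Or.inr (Or.inr (Or.inr (Or.inr (Or.inr (Or.inr (Or.inr (Or.inr (Or.inr (Or.inr (Or.inr (Or.inr (Or.inr (Or.inr (Or.inr (Or.inr (Or.inr (Or.inr (Or.inr (Or.inr (Or.inr (Or.inr (Or.inr (Or.inr (Or.inr (Or.inr (Or.inr (Or.inr (Or.inr (Or.inl hq))))))))))))))))))))))))))))))
  · exact Or.inr (Or.inr (Or.inr (Or.inr (Or.inr (Or.inr (Or.inr (Or.inr (Or.inr (Or.inr (Or.inr (Or.inr (Or.inr (Or.inr (Or.inr (Or.inr (Or.inr (Or.inr (Or.inr (Or.inr (Or.inr (Or.inr (Or.inr (Or.inr (Or.inr (Or.inr (Or.inr (Or.inr (Or.inr (Or.inr (Or.inr (Or.inl hq)))))))))))))))))))))))))))))))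
  · exact Or.inr (Or.inr (Or.inr (Or.inr (Or.inr (Or.inr (Or.inr (Or.inr (Or.inr (Or.inr (Or.inr (Or.inr (Or.inr (Or.inr (Or.inr (Or.inr (Or.inr (Or.inr (Or.inr (Or.inr (Or.inr (Or.inr (Or.inr (Or.inr (Or.inr (Or.inr (Or.inr (Or.inr (Or.inr (Or.inr (Or.inr (Or.inr (Or.inl hq))))))))))))))))))))))))))))))))
  · exact Or.inr (Or.inr (Or.inr (Or.inr (Or.inr (Or.inr (Or.inr (Or.inr (Or.inr (Or.inr (Or.inr (Or.inr (Or.inr (Or.inr (Or.inr (Or.inr (Or.inr (Or.inr (Or.inr (Or.inr (Or.inr (Or.inr (Or.inr (Or.inr (Or.inr (Or.inr (Or.inr (Or.inr (Or.inr (Or.inr (Or.inr (Or.inr (Or.inr (Or.inl hq)))))))))))))))))))))))))))))))))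
  · exact Or.inr (Or.inr (Or.inr (Or.inr (Or.inr (Or.inr (Or.inr (Or.inr (Or.inr (Or.inr (Or.inr (Or.inr (Or.inr (Or.inr (Or.inr (Or.inr (Or.inr (Or.inr (Or.inr (Or.inr (Or.inr (Or.inr (Or.inr (Or.inr (Or.inr (Or.inr (Or.inr (Or.inr (Or.inr (Or.inr (Or.inr (Or.inr (Or.inr (Or.inr (Or.inl hq))))))))))))))))))))))))))))))))))
  · exact absurd rfl hij
  · exact Or.inr (Or.inr (Or.inr (Or.inr (Or.inr (Or.inr (Or.inr (Or.inr (Or.inr (Or.inr (Or.inr (Or.inr (Or.inr (Or.inr (Or.inr (Or.inr (Or.inr (Or.inr (Or.inr (Or.inr (Or.inr (Or.inr (Or.inr (Or.inr (Or.inr (Or.inr (Or.inr (Or.inr (Or.inr (Or.inr (Or.inr (Or.inr (Or.inr (Or.inr (Or.inr (Or.inl hq)))))))))))))))))))))))))))))))))))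
  · exact Or.inr (Or.inr (Or.inr (Or.inr (Or.inr (Or.inr (Or.inr (Or.inr (Or.inr (Or.inr (Or.inr (Or.inr (Or.inr (Or.inr (Or.inr (Or.inr (Or.inr (Or.inr (Or.inr (Or.inr (Or.inr (Or.inr (Or.inr (Or.inr (Or.inr (Or.inr (Or.inr (Or.inr (Or.inr (Or.inr (Or.inr (Or.inr (Or.inr (Or.inr (Or.inr (Or.inr (Or.inl hq))))))))))))))))))))))))))))))))))))
  · exact Or.inr (Or.inr (Or.inr (Or.inr (Or.inr (Or.inr (Or.inr (Or.inr (Or.inr (Or.inr (Or.inr (Or.inr (Or.inr (Or.inr (Or.inr (Or.inr (Or.inr (Or.inr (Or.inr (Or.inr (Or.inr (Or.inr (Or.inr (Or.inr (Or.inr (Or.inr (Or.inr (Or.inr (Or.inr (Or.inr (Or.inr (Or.inr (Or.inr (Or.inr (Or.inr (Or.inr (Or.inr (Or.inl hq)))))))))))))))))))))))))))))))))))))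
  · exact Or.inr (Or.inr (Or.inr (Or.inr (Or.inr (Or.inr (Or.inr (Or.inr (Or.inr (Or.inr (Or.inr (Or.inr (Or.inr (Or.inr (Or.inr (Or.inr (Or.inr (Or.inr (Or.inr (Or.inr (Or.inr (Or.inr (Or.inr (Or.inr (Or.inr (Or.inr (Or.inr (Or.inr (Or.inr (Or.inr (Or.inr (Or.inr (Or.inr (Or.inr (Or.inr (Or.inr (Or.inr (Or.inr (Or.inl hq))))))))))))))))))))))))))))))))))))))
  · exact Or.inr (Or.inr (Or.inr (Or.inr (Or.inr (Or.inr (Or.inr (Or.inr (Or.inr (Or.inr (Or.inr (Or.inr (Or.inr (Or.inr (Or.inr (Or.inr (Or.inr (Or.inr (Or.inr (Or.inr (Or.inr (Or.inr (Or.inr (Or.inr (Or.inr (Or.inr (Or.inr (Or.inr (Or.inr (Or.inr (Or.inr (Or.inr (Or.inr (Or.inr (Or.inr (Or.inr (Or.inr (Or.inr (Or.inr (Or.inl hq)))))))))))))))))))))))))))))))))))))))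
  · exact Or.inr (Or.inr (Or.inr (Or.inr (Or.inr (Or.inr (Or.inr (Or.inr (Or.inr (Or.inr (Or.inr (Or.inr (Or.inr (Or.inr (Or.inr (Or.inr (Or.inr (Or.inr (Or.inr (Or.inr (Or.inr (Or.inr (Or.inr (Or.inr (Or.inr (Or.inr (Or.inr (Or.inr (Or.inr (Or.inr (Or.inr (Or.inr (Or.inr (Or.inr (Or.inr (Or.inr (Or.inr (Or.inr (Or.inr (Or.inr (Or.inl hq))))))))))))))))))))))))))))))))))))))))
  · exact Or.inr (Or.inr (Or.inr (Or.inr (Or.inr (Or.inr (Or.inr (Or.inr (Or.inr (Or.inr (Or.inr (Or.inr (Or.inr (Or.inr (Or.inr (Or.inr (Or.inr (Or.inr (Or.inr (Or.inr (Or.inr (Or.inr (Or.inr (Or.inr (Or.inr (Or.inr (Or.inr (Or.inr (Or.inr (Or.inr (Or.inr (Or.inr (Or.inr (Or.inr (Or.inr (Or.inr (Or.inr (Or.inr (Or.inr (Or.inr (Or.inr (hq)))))))))))))))))))))))))))))))))))))))))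
  · exact absurd rfl hij

lemma suff_core (e a b d x y : ℤ) (he : e = 1 ∨ e = -1)
    (h6 : (a=1∧b=2∧d=1) ∨ (a=2∧b=2∧d=1) ∨ (a=2∧b=3∧d=1) ∨ (a=2∧b=4∧d=2) ∨
          (a=3∧b=4∧d=2) ∨ (a=3∧b=5∧d=2))
    (h : (1 * x + (-1) * y + e * 1 < 0 ∧ ¬(2 * x + (-1) * y + e * a < 0) ∧ 2 * x + (-1) * y + e * a < 0 ∧ ¬(3 * x + (-1) * y + e * b < 0)) ∨
      (1 * x + (-1) * y + e * 1 < 0 ∧ ¬(2 * x + (-1) * y + e * a < 0) ∧ 3 * x + (-1) * y + e * b < 0 ∧ ¬(1 * x + 0 * y + e * d < 0)) ∨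
      (1 * x + (-1) * y + e * 1 < 0 ∧ ¬(2 * x + (-1) * y + e * a < 0) ∧ 1 * x + 0 * y + e * d < 0 ∧ ¬(0 * x + 1 * y + e * 1 < 0)) ∨
      (1 * x + (-1) * y + e * 1 < 0 ∧ ¬(2 * x + (-1) * y + e * a < 0) ∧ 0 * x + 1 * y + e * 1 < 0 ∧ ¬((-1) * x + 2 * y + e * 0 < 0)) ∨
      (1 * x + (-1) * y + e * 1 < 0 ∧ ¬(2 * x + (-1) * y + e * a < 0) ∧ (-1) * x + 2 * y + e * 0 < 0 ∧ ¬(0 * x + (-1) * y + e * 0 < 0)) ∨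
      (1 * x + (-1) * y + e * 1 < 0 ∧ ¬(2 * x + (-1) * y + e * a < 0) ∧ 0 * x + (-1) * y + e * 0 < 0 ∧ ¬(1 * x + (-1) * y + e * 1 < 0)) ∨
      (2 * x + (-1) * y + e * a < 0 ∧ ¬(3 * x + (-1) * y + e * b < 0) ∧ 1 * x + (-1) * y + e * 1 < 0 ∧ ¬(2 * x + (-1) * y + e * a < 0)) ∨
      (2 * x + (-1) * y + e * a < 0 ∧ ¬(3 * x + (-1) * y + e * b < 0) ∧ 3 * x + (-1) * y + e * b < 0 ∧ ¬(1 * x + 0 * y + e * d < 0)) ∨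
      (2 * x + (-1) * y + e * a < 0 ∧ ¬(3 * x + (-1) * y + e * b < 0) ∧ 1 * x + 0 * y + e * d < 0 ∧ ¬(0 * x + 1 * y + e * 1 < 0)) ∨
      (2 * x + (-1) * y + e * a < 0 ∧ ¬(3 * x + (-1) * y + e * b < 0) ∧ 0 * x + 1 * y + e * 1 < 0 ∧ ¬((-1) * x + 2 * y + e * 0 < 0)) ∨
      (2 * x + (-1) * y + e * a < 0 ∧ ¬(3 * x + (-1) * y + e * b < 0) ∧ (-1) * x + 2 * y + e * 0 < 0 ∧ ¬(0 * x + (-1) * y + e * 0 < 0)) ∨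
      (2 * x + (-1) * y + e * a < 0 ∧ ¬(3 * x + (-1) * y + e * b < 0) ∧ 0 * x + (-1) * y + e * 0 < 0 ∧ ¬(1 * x + (-1) * y + e * 1 < 0)) ∨
      (3 * x + (-1) * y + e * b < 0 ∧ ¬(1 * x + 0 * y + e * d < 0) ∧ 1 * x + (-1) * y + e * 1 < 0 ∧ ¬(2 * x + (-1) * y + e * a < 0)) ∨
      (3 * x + (-1) * y + e * b < 0 ∧ ¬(1 * x + 0 * y + e * d < 0) ∧ 2 * x + (-1) * y + e * a < 0 ∧ ¬(3 * x + (-1) * y + e * b < 0)) ∨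
      (3 * x + (-1) * y + e * b < 0 ∧ ¬(1 * x + 0 * y + e * d < 0) ∧ 1 * x + 0 * y + e * d < 0 ∧ ¬(0 * x + 1 * y + e * 1 < 0)) ∨
      (3 * x + (-1) * y + e * b < 0 ∧ ¬(1 * x + 0 * y + e * d < 0) ∧ 0 * x + 1 * y + e * 1 < 0 ∧ ¬((-1) * x + 2 * y + e * 0 < 0)) ∨
      (3 * x + (-1) * y + e * b < 0 ∧ ¬(1 * x + 0 * y + e * d < 0) ∧ (-1) * x + 2 * y + e * 0 < 0 ∧ ¬(0 * x + (-1) * y + e * 0 < 0)) ∨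
      (3 * x + (-1) * y + e * b < 0 ∧ ¬(1 * x + 0 * y + e * d < 0) ∧ 0 * x + (-1) * y + e * 0 < 0 ∧ ¬(1 * x + (-1) * y + e * 1 < 0)) ∨
      (1 * x + 0 * y + e * d < 0 ∧ ¬(0 * x + 1 * y + e * 1 < 0) ∧ 1 * x + (-1) * y + e * 1 < 0 ∧ ¬(2 * x + (-1) * y + e * a < 0)) ∨
      (1 * x + 0 * y + e * d < 0 ∧ ¬(0 * x + 1 * y + e * 1 < 0) ∧ 2 * x + (-1) * y + e * a < 0 ∧ ¬(3 * x + (-1) * y + e * b < 0)) ∨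
      (1 * x + 0 * y + e * d < 0 ∧ ¬(0 * x + 1 * y + e * 1 < 0) ∧ 3 * x + (-1) * y + e * b < 0 ∧ ¬(1 * x + 0 * y + e * d < 0)) ∨
      (1 * x + 0 * y + e * d < 0 ∧ ¬(0 * x + 1 * y + e * 1 < 0) ∧ 0 * x + 1 * y + e * 1 < 0 ∧ ¬((-1) * x + 2 * y + e * 0 < 0)) ∨
      (1 * x + 0 * y + e * d < 0 ∧ ¬(0 * x + 1 * y + e * 1 < 0) ∧ (-1) * x + 2 * y + e * 0 < 0 ∧ ¬(0 * x + (-1) * y + e * 0 < 0)) ∨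
      (1 * x + 0 * y + e * d < 0 ∧ ¬(0 * x + 1 * y + e * 1 < 0) ∧ 0 * x + (-1) * y + e * 0 < 0 ∧ ¬(1 * x + (-1) * y + e * 1 < 0)) ∨
      (0 * x + 1 * y + e * 1 < 0 ∧ ¬((-1) * x + 2 * y + e * 0 < 0) ∧ 1 * x + (-1) * y + e * 1 < 0 ∧ ¬(2 * x + (-1) * y + e * a < 0)) ∨
      (0 * x + 1 * y + e * 1 < 0 ∧ ¬((-1) * x + 2 * y + e * 0 < 0) ∧ 2 * x + (-1) * y + e * a < 0 ∧ ¬(3 * x + (-1) * y + e * b < 0)) ∨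
      (0 * x + 1 * y + e * 1 < 0 ∧ ¬((-1) * x + 2 * y + e * 0 < 0) ∧ 3 * x + (-1) * y + e * b < 0 ∧ ¬(1 * x + 0 * y + e * d < 0)) ∨
      (0 * x + 1 * y + e * 1 < 0 ∧ ¬((-1) * x + 2 * y + e * 0 < 0) ∧ 1 * x + 0 * y + e * d < 0 ∧ ¬(0 * x + 1 * y + e * 1 < 0)) ∨
      (0 * x + 1 * y + e * 1 < 0 ∧ ¬((-1) * x + 2 * y + e * 0 < 0) ∧ (-1) * x + 2 * y + e * 0 < 0 ∧ ¬(0 * x + (-1) * y + e * 0 < 0)) ∨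
      (0 * x + 1 * y + e * 1 < 0 ∧ ¬((-1) * x + 2 * y + e * 0 < 0) ∧ 0 * x + (-1) * y + e * 0 < 0 ∧ ¬(1 * x + (-1) * y + e * 1 < 0)) ∨
      ((-1) * x + 2 * y + e * 0 < 0 ∧ ¬(0 * x + (-1) * y + e * 0 < 0) ∧ 1 * x + (-1) * y + e * 1 < 0 ∧ ¬(2 * x + (-1) * y + e * a < 0)) ∨
      ((-1) * x + 2 * y + e * 0 < 0 ∧ ¬(0 * x + (-1) * y + e * 0 < 0) ∧ 2 * x + (-1) * y + e * a < 0 ∧ ¬(3 * x + (-1) * y + e * b < 0)) ∨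
      ((-1) * x + 2 * y + e * 0 < 0 ∧ ¬(0 * x + (-1) * y + e * 0 < 0) ∧ 3 * x + (-1) * y + e * b < 0 ∧ ¬(1 * x + 0 * y + e * d < 0)) ∨
      ((-1) * x + 2 * y + e * 0 < 0 ∧ ¬(0 * x + (-1) * y + e * 0 < 0) ∧ 1 * x + 0 * y + e * d < 0 ∧ ¬(0 * x + 1 * y + e * 1 < 0)) ∨
      ((-1) * x + 2 * y + e * 0 < 0 ∧ ¬(0 * x + (-1) * y + e * 0 < 0) ∧ 0 * x + 1 * y + e * 1 < 0 ∧ ¬((-1) * x + 2 * y + e * 0 < 0)) ∨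
      ((-1) * x + 2 * y + e * 0 < 0 ∧ ¬(0 * x + (-1) * y + e * 0 < 0) ∧ 0 * x + (-1) * y + e * 0 < 0 ∧ ¬(1 * x + (-1) * y + e * 1 < 0)) ∨
      (0 * x + (-1) * y + e * 0 < 0 ∧ ¬(1 * x + (-1) * y + e * 1 < 0) ∧ 1 * x + (-1) * y + e * 1 < 0 ∧ ¬(2 * x + (-1) * y + e * a < 0)) ∨
      (0 * x + (-1) * y + e * 0 < 0 ∧ ¬(1 * x + (-1) * y + e * 1 < 0) ∧ 2 * x + (-1) * y + e * a < 0 ∧ ¬(3 * x + (-1) * y + e * b < 0)) ∨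
      (0 * x + (-1) * y + e * 0 < 0 ∧ ¬(1 * x + (-1) * y + e * 1 < 0) ∧ 3 * x + (-1) * y + e * b < 0 ∧ ¬(1 * x + 0 * y + e * d < 0)) ∨
      (0 * x + (-1) * y + e * 0 < 0 ∧ ¬(1 * x + (-1) * y + e * 1 < 0) ∧ 1 * x + 0 * y + e * d < 0 ∧ ¬(0 * x + 1 * y + e * 1 < 0)) ∨
      (0 * x + (-1) * y + e * 0 < 0 ∧ ¬(1 * x + (-1) * y + e * 1 < 0) ∧ 0 * x + 1 * y + e * 1 < 0 ∧ ¬((-1) * x + 2 * y + e * 0 < 0)) ∨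
      (0 * x + (-1) * y + e * 0 < 0 ∧ ¬(1 * x + (-1) * y + e * 1 < 0) ∧ (-1) * x + 2 * y + e * 0 < 0 ∧ ¬(0 * x + (-1) * y + e * 0 < 0))) : False := by
  rcases he with rfl | rfl <;>
    rcases h6 with ⟨rfl,rfl,rfl⟩|⟨rfl,rfl,rfl⟩|⟨rfl,rfl,rfl⟩|⟨rfl,rfl,rfl⟩|⟨rfl,rfl,rfl⟩|⟨rfl,rfl,rfl⟩ <;>
    omega

lemma free_of (a b d : ℤ)
    (h6 : (a=1∧b=2∧d=1) ∨ (a=2∧b=2∧d=1) ∨ (a=2∧b=3∧d=1) ∨ (a=2∧b=4∧d=2) ∨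
          (a=3∧b=4∧d=2) ∨ (a=3∧b=5∧d=2)) :
    CohomologyFree ![1,a,b,d,1] := by
  intro m ε hε
  obtain ⟨x, y⟩ := m
  have hne : Nset (ε • ![1,a,b,d,1]) (x, y) ≠ Finset.univ := by
    intro hu
    have h4 := (mem_Nset _ _ 4).mp (hu ▸ Finset.mem_univ (4 : Fin 7))
    have h6' := (mem_Nset _ _ 6).mp (hu ▸ Finset.mem_univ (6 : Fin 7))
    rw [cExt_smul] at h4 h6'
    have h4' : 0 * x + 1 * y + ε * 1 < 0 := h4
    have h6'' : 0 * x + -1 * y + ε * 0 < 0 := h6'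
    rcases hε with rfl | rfl <;> omega
  refine ⟨circ_of_noDesc _ ?_ hne, hne⟩
  rintro ⟨i, j, hij, h1, h2, h3, h4⟩
  rw [mem_Nset, cExt_smul] at h1 h3
  have h2' : ¬ ((rayForm (i+1)).1 * x + (rayForm (i+1)).2 * y + ε * cExt ![1,a,b,d,1] (i+1) < 0) :=
    fun hh => h2 (by rw [mem_Nset, cExt_smul]; exact hh)
  have h4' : ¬ ((rayForm (j+1)).1 * x + (rayForm (j+1)).2 * y + ε * cExt ![1,a,b,d,1] (j+1) < 0) :=
    fun hh => h4 (by rw [mem_Nset, cExt_smul]; exact hh)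
  exact suff_core ε a b d x y hε h6
    (ex_pair7 (Q := fun i j =>
      (rayForm i).1 * x + (rayForm i).2 * y + ε * cExt ![1,a,b,d,1] i < 0 ∧
      ¬((rayForm (i+1)).1 * x + (rayForm (i+1)).2 * y + ε * cExt ![1,a,b,d,1] (i+1) < 0) ∧
      (rayForm j).1 * x + (rayForm j).2 * y + ε * cExt ![1,a,b,d,1] j < 0 ∧
      ¬((rayForm (j+1)).1 * x + (rayForm (j+1)).2 * y + ε * cExt ![1,a,b,d,1] (j+1) < 0))
      ⟨i, j, hij, h1, h2', h3, h4'⟩)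


lemma LB {P : Prop} {y : ℤ} (g : P ∨ y ≤ 0) (g0 : 1 ≤ y) : P := by
  rcases g with h|h; exact h; omega
lemma LB3 {P : Prop} {y : ℤ} (g : P ∨ 3 ≤ y) (g1 : y ≤ 2) : P := by
  rcases g with h|h; exact h; omega
lemma LBb {P : Prop} {y : ℤ} (g : P ∨ y ≤ 1) (g0 : 2 ≤ y) : P := by
  rcases g with h|h; exact h; omega

lemma final (a b d : ℤ)
    (g0 : d ≥ 1) (g1 : d ≤ 2) (g2 : b ≥ 2 ∨ d ≤ 0) (g3 : a ≥ 1 ∨ b ≤ 1)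
    (g4 : a ≤ 4 ∨ d ≥ 3) (g5 : b ≤ 5 ∨ d ≥ 3) (g6 : b ≥ 4 ∨ d ≤ 1) (g7 : b ≤ 3 ∨ d ≥ 2)
    (g8 : a ≤ 2 ∨ b ≥ 4 ∨ d ≤ 0) (g9 : a ≥ 2 ∨ b ≤ 3) (g10 : a ≤ 3 ∨ b ≥ 6 ∨ d ≤ 1)
    (g11 : a ≥ 2 ∨ b ≤ 2 ∨ d ≥ 2) (g12 : a ≥ 3 ∨ b ≤ 4 ∨ d ≥ 3) :
    (a=1∧b=2∧d=1) ∨ (a=2∧b=2∧d=1) ∨ (a=2∧b=3∧d=1) ∨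
    (a=2∧b=4∧d=2) ∨ (a=3∧b=4∧d=2) ∨ (a=3∧b=5∧d=2) := by
  have hb2 : b ≥ 2 := LB g2 g0
  have hb5 : b ≤ 5 := LB3 g5 g1
  have ha1 : a ≥ 1 := LBb g3 hb2
  have ha4 : a ≤ 4 := LB3 g4 g1
  clear g2 g3 g4 g5
  have hd : d = 1 ∨ d = 2 := by clear g6 g7 g8 g9 g10 g11 g12; omega
  have ha : a = 1 ∨ a = 2 ∨ a = 3 ∨ a = 4 := by clear g6 g7 g8 g9 g10 g11 g12; omega
  have hb : b = 2 ∨ b = 3 ∨ b = 4 ∨ b = 5 := by clear g6 g7 g8 g9 g10 g11 g12; omega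
  clear g0 g1 hb2 hb5 ha1 ha4
  rcases hd with rfl|rfl <;> rcases ha with rfl|rfl|rfl|rfl <;>
    rcases hb with rfl|rfl|rfl|rfl <;> omega

lemma eq_tuple (c : Fin 5 → ℤ) (h0 : c 0 = 1) (h4 : c 4 = 1) (v1 v2 v3 : ℤ) :
    c = ![1, v1, v2, v3, 1] ↔ c 1 = v1 ∧ c 2 = v2 ∧ c 3 = v3 := by
  constructor
  · rintro rfl; exact ⟨rfl, rfl, rfl⟩
  · rintro ⟨e1, e2, e3⟩
    funext i
    fin_cases i
    · exact h0
    · exact e1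
    · exact e2
    · exact e3
    · exact h4

end helpers

/-- Classification of cohomology-free vectors with `c₅ = 1` and `c₁ = 1`. -/
theorem classification_c5_one_c1_one (c : Fin 5 → ℤ) (h5 : c 4 = 1)
    (h1 : c 0 = 1) :
    CohomologyFree c ↔
      c = ![1,1,2,1,1] ∨ c = ![1,2,2,1,1] ∨ c = ![1,2,3,1,1] ∨
      c = ![1,2,4,2,1] ∨ c = ![1,3,4,2,1] ∨ c = ![1,3,5,2,1] := by
  constructor
  · intro h
    have g0 : c 3 ≥ 1 := by
      have ff : ¬(1 * (-1) + 0 * (-1) + 1 * c 3 < 0 ∧ ¬(0 * (-1) + 1 * (-1) + 1 * c 4 < 0) ∧ (-1) * (-1) + 2 * (-1) + 1 * 0 < 0 ∧ ¬(0 * (-1) + (-1) * (-1) + 1 * 0 < 0)) := bridge c h 1 (by norm_num) ((-1), (-1)) 3 5 (by decide)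
      omega
    have g1 : c 3 ≤ 2 := by
      have ff : ¬(1 * 2 + 0 * 1 + (-1) * c 3 < 0 ∧ ¬(0 * 2 + 1 * 1 + (-1) * c 4 < 0) ∧ 0 * 2 + (-1) * 1 + (-1) * 0 < 0 ∧ ¬(1 * 2 + (-1) * 1 + (-1) * c 0 < 0)) := bridge c h (-1) (by norm_num) (2, 1) 3 6 (by decide)
      omega
    have g2 : c 2 ≥ 2 ∨ c 3 ≤ 0 := by
      have ff : ¬(3 * (-1) + (-1) * (-1) + 1 * c 2 < 0 ∧ ¬(1 * (-1) + 0 * (-1) + 1 * c 3 < 0) ∧ (-1) * (-1) + 2 * (-1) + 1 * 0 < 0 ∧ ¬(0 * (-1) + (-1) * (-1) + 1 * 0 < 0)) := bridge c h 1 (by norm_num) ((-1), (-1)) 2 5 (by decide)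
      omega
    have g3 : c 1 ≥ 1 ∨ c 2 ≤ 1 := by
      have ff : ¬(2 * (-1) + (-1) * (-1) + 1 * c 1 < 0 ∧ ¬(3 * (-1) + (-1) * (-1) + 1 * c 2 < 0) ∧ (-1) * (-1) + 2 * (-1) + 1 * 0 < 0 ∧ ¬(0 * (-1) + (-1) * (-1) + 1 * 0 < 0)) := bridge c h 1 (by norm_num) ((-1), (-1)) 1 5 (by decide)
      omega
    have g4 : c 1 ≤ 4 ∨ c 3 ≥ 3 := by
      have ff : ¬(1 * (-3) + (-1) * (-1) + 1 * c 0 < 0 ∧ ¬(2 * (-3) + (-1) * (-1) + 1 * c 1 < 0) ∧ 1 * (-3) + 0 * (-1) + 1 * c 3 < 0 ∧ ¬(0 * (-3) + 1 * (-1) + 1 * c 4 < 0)) := bridge c h 1 (by norm_num) ((-3), (-1)) 0 3 (by decide)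
      omega
    have g5 : c 2 ≤ 5 ∨ c 3 ≥ 3 := by
      have ff : ¬(3 * 2 + (-1) * 1 + (-1) * c 2 < 0 ∧ ¬(1 * 2 + 0 * 1 + (-1) * c 3 < 0) ∧ 0 * 2 + (-1) * 1 + (-1) * 0 < 0 ∧ ¬(1 * 2 + (-1) * 1 + (-1) * c 0 < 0)) := bridge c h (-1) (by norm_num) (2, 1) 2 6 (by decide)
      omega
    have g6 : c 2 ≥ 4 ∨ c 3 ≤ 1 := by
      have ff : ¬(3 * (-2) + (-1) * (-2) + 1 * c 2 < 0 ∧ ¬(1 * (-2) + 0 * (-2) + 1 * c 3 < 0) ∧ (-1) * (-2) + 2 * (-2) + 1 * 0 < 0 ∧ ¬(0 * (-2) + (-1) * (-2) + 1 * 0 < 0)) := bridge c h 1 (by norm_num) ((-2), (-2)) 2 5 (by decide)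
      omega
    have g7 : c 2 ≤ 3 ∨ c 3 ≥ 2 := by
      have ff : ¬(3 * 1 + (-1) * 0 + (-1) * c 2 < 0 ∧ ¬(1 * 1 + 0 * 0 + (-1) * c 3 < 0) ∧ (-1) * 1 + 2 * 0 + (-1) * 0 < 0 ∧ ¬(0 * 1 + (-1) * 0 + (-1) * 0 < 0)) := bridge c h (-1) (by norm_num) (1, 0) 2 5 (by decide)
      omega
    have g8 : c 1 ≤ 2 ∨ c 2 ≥ 4 ∨ c 3 ≤ 0 := by
      have ff : ¬(1 * (-1) + (-1) * 1 + 1 * c 0 < 0 ∧ ¬(2 * (-1) + (-1) * 1 + 1 * c 1 < 0) ∧ 3 * (-1) + (-1) * 1 + 1 * c 2 < 0 ∧ ¬(1 * (-1) + 0 * 1 + 1 * c 3 < 0)) := bridge c h 1 (by norm_num) ((-1), 1) 0 2 (by decide)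
      omega
    have g9 : c 1 ≥ 2 ∨ c 2 ≤ 3 := by
      have ff : ¬(2 * (-2) + (-1) * (-2) + 1 * c 1 < 0 ∧ ¬(3 * (-2) + (-1) * (-2) + 1 * c 2 < 0) ∧ (-1) * (-2) + 2 * (-2) + 1 * 0 < 0 ∧ ¬(0 * (-2) + (-1) * (-2) + 1 * 0 < 0)) := bridge c h 1 (by norm_num) ((-2), (-2)) 1 5 (by decide)
      omega
    have g10 : c 1 ≤ 3 ∨ c 2 ≥ 6 ∨ c 3 ≤ 1 := by
      have ff : ¬(1 * (-2) + (-1) * 0 + 1 * c 0 < 0 ∧ ¬(2 * (-2) + (-1) * 0 + 1 * c 1 < 0) ∧ 3 * (-2) + (-1) * 0 + 1 * c 2 < 0 ∧ ¬(1 * (-2) + 0 * 0 + 1 * c 3 < 0)) := bridge c h 1 (by norm_num) ((-2), 0) 0 2 (by decide)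
      omega
    have g11 : c 1 ≥ 2 ∨ c 2 ≤ 2 ∨ c 3 ≥ 2 := by
      have ff : ¬(1 * 1 + (-1) * 1 + (-1) * c 0 < 0 ∧ ¬(2 * 1 + (-1) * 1 + (-1) * c 1 < 0) ∧ 3 * 1 + (-1) * 1 + (-1) * c 2 < 0 ∧ ¬(1 * 1 + 0 * 1 + (-1) * c 3 < 0)) := bridge c h (-1) (by norm_num) (1, 1) 0 2 (by decide)
      omega
    have g12 : c 1 ≥ 3 ∨ c 2 ≤ 4 ∨ c 3 ≥ 3 := by
      have ff : ¬(1 * 2 + (-1) * 2 + (-1) * c 0 < 0 ∧ ¬(2 * 2 + (-1) * 2 + (-1) * c 1 < 0) ∧ 3 * 2 + (-1) * 2 + (-1) * c 2 < 0 ∧ ¬(1 * 2 + 0 * 2 + (-1) * c 3 < 0)) := bridge c h (-1) (by norm_num) (2, 2) 0 2 (by decide)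
      omega
    rw [eq_tuple c h1 h5, eq_tuple c h1 h5, eq_tuple c h1 h5, eq_tuple c h1 h5,
        eq_tuple c h1 h5, eq_tuple c h1 h5]
    exact final (c 1) (c 2) (c 3) g0 g1 g2 g3 g4 g5 g6 g7 g8 g9 g10 g11 g12
  · intro hc
    have hc' : (c 1=1∧c 2=2∧c 3=1) ∨ (c 1=2∧c 2=2∧c 3=1) ∨ (c 1=2∧c 2=3∧c 3=1) ∨
        (c 1=2∧c 2=4∧c 3=2) ∨ (c 1=3∧c 2=4∧c 3=2) ∨ (c 1=3∧c 2=5∧c 3=2) := by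
      rcases hc with rfl|rfl|rfl|rfl|rfl|rfl <;> simp
    have hceq : c = ![1, c 1, c 2, c 3, 1] := by
      funext i; fin_cases i
      · exact h1
      · rfl
      · rfl
      · rfl
      · exact h5
    rw [hceq]
    exact free_of (c 1) (c 2) (c 3) hc'
end

section
/- For every integer k ≥ 2, a vector c = (k, c_2, c_3, k, 1) ∈ ℤ⁵ is cohomology-free if and only if (c_2, c_3) is one of the four pairs (2k−1, 3k−2), (2k−1, 3k−1), (2k, 3k−1), (2k, 3k). -/
/-! ### Auxiliary machinery -/

/-- Decidable version of `IsCircularInterval` with the length bounded by `Fin 7`. -/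
def circOK (S : Finset (Fin 7)) : Prop :=
  S = ∅ ∨ ∃ a n : Fin 7, S = (Finset.range (n.val + 1)).image fun j : ℕ => a + (Fin.ofNat 7 j : Fin 7)

instance : DecidablePred circOK := fun S => by unfold circOK; infer_instance

lemma image_univ_of_ge (a : Fin 7) (n : ℕ) (hn : 6 ≤ n) :
    ((Finset.range (n + 1)).image fun j : ℕ => a + (Fin.ofNat 7 j : Fin 7)) = Finset.univ := by
  ext x
  simp only [Finset.mem_image, Finset.mem_range, Finset.mem_univ, iff_true]
  refine ⟨(x - a).val, by have := (x - a).isLt; omega, ?_⟩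
  rw [Fin.ofNat_val_eq_self]
  abel

lemma circ_iff (S : Finset (Fin 7)) : IsCircularInterval S ↔ circOK S := by
  constructor
  · rintro (h | ⟨a, n, h⟩)
    · exact Or.inl h
    · by_cases hn : n ≤ 6
      · exact Or.inr ⟨a, ⟨n, by omega⟩, h⟩
      · refine Or.inr ⟨a, ⟨6, by omega⟩, ?_⟩
        rw [h, image_univ_of_ge a n (by omega), image_univ_of_ge a 6 (by omega)]
  · rintro (h | ⟨a, n, h⟩)
    · exact Or.inl h
    · exact Or.inr ⟨a, n.val, h⟩

set_option maxRecDepth 100000 in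
lemma noTwo_circ : ∀ S : Finset (Fin 7),
    (∀ i j : Fin 7, i ∈ S → i + 1 ∉ S → j ∈ S → j + 1 ∉ S → i = j) → circOK S := by decide

set_option maxRecDepth 100000 in
lemma circ_noTwo : ∀ S : Finset (Fin 7), circOK S →
    ∀ i j : Fin 7, i ∈ S → i + 1 ∉ S → j ∈ S → j + 1 ∉ S → i = j := by decide

lemma circ_of_noTwo (S : Finset (Fin 7))
    (h : ∀ i j : Fin 7, i ∈ S → i + 1 ∉ S → j ∈ S → j + 1 ∉ S → i = j) :
    IsCircularInterval S := (circ_iff S).2 (noTwo_circ S h)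

lemma not_circ (S : Finset (Fin 7)) (i j : Fin 7) (hij : i ≠ j)
    (h1 : i ∈ S) (h2 : i + 1 ∉ S) (h3 : j ∈ S) (h4 : j + 1 ∉ S)
    (hc : IsCircularInterval S) : False :=
  hij (circ_noTwo S ((circ_iff S).1 hc) i j h1 h2 h3 h4)

/-! ### Membership lemmas -/

lemma mem0 (a b c d e x y : ℤ) :
    (0 : Fin 7) ∈ Nset ![a,b,c,d,e] (x, y) ↔ x - y + a < 0 := by
  simp only [Nset, Finset.mem_filter, Finset.mem_univ, true_and,
    show rayForm 0 = (1,-1) from rfl, show cExt ![a,b,c,d,e] 0 = a from rfl]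
  omega

lemma mem1 (a b c d e x y : ℤ) :
    (1 : Fin 7) ∈ Nset ![a,b,c,d,e] (x, y) ↔ 2*x - y + b < 0 := by
  simp only [Nset, Finset.mem_filter, Finset.mem_univ, true_and,
    show rayForm 1 = (2,-1) from rfl, show cExt ![a,b,c,d,e] 1 = b from rfl]
  omega

lemma mem2 (a b c d e x y : ℤ) :
    (2 : Fin 7) ∈ Nset ![a,b,c,d,e] (x, y) ↔ 3*x - y + c < 0 := by
  simp only [Nset, Finset.mem_filter, Finset.mem_univ, true_and,
    show rayForm 2 = (3,-1) from rfl, show cExt ![a,b,c,d,e] 2 = c from rfl]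
  omega

lemma mem3 (a b c d e x y : ℤ) :
    (3 : Fin 7) ∈ Nset ![a,b,c,d,e] (x, y) ↔ x + d < 0 := by
  simp only [Nset, Finset.mem_filter, Finset.mem_univ, true_and,
    show rayForm 3 = (1,0) from rfl, show cExt ![a,b,c,d,e] 3 = d from rfl]
  omega

lemma mem4 (a b c d e x y : ℤ) :
    (4 : Fin 7) ∈ Nset ![a,b,c,d,e] (x, y) ↔ y + e < 0 := by
  simp only [Nset, Finset.mem_filter, Finset.mem_univ, true_and,
    show rayForm 4 = (0,1) from rfl, show cExt ![a,b,c,d,e] 4 = e from rfl]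
  omega

lemma mem5 (a b c d e x y : ℤ) :
    (5 : Fin 7) ∈ Nset ![a,b,c,d,e] (x, y) ↔ -x + 2*y < 0 := by
  simp only [Nset, Finset.mem_filter, Finset.mem_univ, true_and,
    show rayForm 5 = (-1,2) from rfl, show cExt ![a,b,c,d,e] 5 = 0 from rfl]
  omega

lemma mem6 (a b c d e x y : ℤ) :
    (6 : Fin 7) ∈ Nset ![a,b,c,d,e] (x, y) ↔ -y < 0 := by
  simp only [Nset, Finset.mem_filter, Finset.mem_univ, true_and,
    show rayForm 6 = (0,-1) from rfl, show cExt ![a,b,c,d,e] 6 = 0 from rfl]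
  omega

lemma negsmul (a b c d e : ℤ) :
    (-1 : ℤ) • ![a,b,c,d,e] = ![-a,-b,-c,-d,-e] := by
  funext i; fin_cases i <;> simp

lemma onesmul (a b c d e : ℤ) :
    (1 : ℤ) • ![a,b,c,d,e] = ![a,b,c,d,e] := one_smul _ _

/-! ### Main theorem -/

/-- For `k ≥ 2`, the vector `(k, c₂, c₃, k, 1)` is cohomology-free iff
`(c₂, c₃)` is one of `(2k-1, 3k-2)`, `(2k-1, 3k-1)`, `(2k, 3k-1)`, `(2k, 3k)`. -/
theorem classification_c4_eq_c1 (k : ℤ) (hk : 2 ≤ k) (c2 c3 : ℤ) :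
    CohomologyFree ![k, c2, c3, k, 1] ↔
      (c2 = 2*k - 1 ∧ c3 = 3*k - 2) ∨ (c2 = 2*k - 1 ∧ c3 = 3*k - 1) ∨
      (c2 = 2*k ∧ c3 = 3*k - 1) ∨ (c2 = 2*k ∧ c3 = 3*k) := by
  constructor
  · intro h
    have ha : c3 ≤ 3*k := by
      by_contra hc
      obtain ⟨h1, -⟩ := h (k, 0) (-1) (Or.inr rfl)
      rw [negsmul] at h1
      exact not_circ _ 2 5 (by decide)
        ((mem2 ..).2 (by omega))
        (by rw [show (2:Fin 7)+1 = 3 from rfl, mem3]; omega)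
        ((mem5 ..).2 (by omega))
        (by rw [show (5:Fin 7)+1 = 6 from rfl, mem6]; omega) h1
    have hb : 3*k - 2 ≤ c3 := by
      by_contra hc
      obtain ⟨h1, -⟩ := h (1 - k, 1) 1 (Or.inl rfl)
      rw [onesmul] at h1
      exact not_circ _ 2 6 (by decide)
        ((mem2 ..).2 (by omega))
        (by rw [show (2:Fin 7)+1 = 3 from rfl, mem3]; omega)
        ((mem6 ..).2 (by omega))
        (by rw [show (6:Fin 7)+1 = 0 from rfl, mem0]; omega) h1
    have hcu : c2 ≤ 2*k := by
      by_contra hc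
      obtain ⟨h1, -⟩ := h (-k, 1) 1 (Or.inl rfl)
      rw [onesmul] at h1
      exact not_circ _ 0 2 (by decide)
        ((mem0 ..).2 (by omega))
        (by rw [show (0:Fin 7)+1 = 1 from rfl, mem1]; omega)
        ((mem2 ..).2 (by omega))
        (by rw [show (2:Fin 7)+1 = 3 from rfl, mem3]; omega) h1
    have hcl : 2*k - 1 ≤ c2 := by
      by_contra hc
      obtain ⟨h1, -⟩ := h (k - 1, 0) (-1) (Or.inr rfl)
      rw [negsmul] at h1
      exact not_circ _ 0 5 (by decide)
        ((mem0 ..).2 (by omega))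
        (by rw [show (0:Fin 7)+1 = 1 from rfl, mem1]; omega)
        ((mem5 ..).2 (by omega))
        (by rw [show (5:Fin 7)+1 = 6 from rfl, mem6]; omega) h1
    have he : ¬(c2 ≤ 2*k - 1 ∧ 3*k ≤ c3) := by
      rintro ⟨e1, e2⟩
      obtain ⟨h1, -⟩ := h (k, 1) (-1) (Or.inr rfl)
      rw [negsmul] at h1
      exact not_circ _ 0 2 (by decide)
        ((mem0 ..).2 (by omega))
        (by rw [show (0:Fin 7)+1 = 1 from rfl, mem1]; omega)
        ((mem2 ..).2 (by omega))
        (by rw [show (2:Fin 7)+1 = 3 from rfl, mem3]; omega) h1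
    have hf : ¬(2*k ≤ c2 ∧ c3 ≤ 3*k - 2) := by
      rintro ⟨f1, f2⟩
      obtain ⟨h1, -⟩ := h (k - 1, -1) (-1) (Or.inr rfl)
      rw [negsmul] at h1
      exact not_circ _ 1 5 (by decide)
        ((mem1 ..).2 (by omega))
        (by rw [show (1:Fin 7)+1 = 2 from rfl, mem2]; omega)
        ((mem5 ..).2 (by omega))
        (by rw [show (5:Fin 7)+1 = 6 from rfl, mem6]; omega) h1
    omega
  · intro hc
    have hc2 : 2*k - 1 ≤ c2 ∧ c2 ≤ 2*k ∧ c2 + k - 1 ≤ c3 ∧ c3 ≤ c2 + k := by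
      rcases hc with ⟨h1, h2⟩ | ⟨h1, h2⟩ | ⟨h1, h2⟩ | ⟨h1, h2⟩ <;> omega
    obtain ⟨hA, hB, hC, hD⟩ := hc2
    rintro ⟨x, y⟩ ε hε
    obtain rfl | rfl := hε
    · rw [onesmul]
      constructor
      · refine circ_of_noTwo _ ?_
        intro i j h1 h2 h3 h4
        fin_cases i <;> fin_cases j <;>
          first
            | rfl
            | (exfalso;
               simp only [Fin.reduceFinMk, Fin.isValue, Fin.reduceAdd, mem0, mem1, mem2, mem3, mem4,
                 mem5, mem6] at h1 h2 h3 h4;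
               omega)
      · intro huniv
        have m4 : (4 : Fin 7) ∈ Nset ![k,c2,c3,k,1] (x, y) := by
          rw [huniv]; exact Finset.mem_univ _
        have m6 : (6 : Fin 7) ∈ Nset ![k,c2,c3,k,1] (x, y) := by
          rw [huniv]; exact Finset.mem_univ _
        rw [mem4] at m4
        rw [mem6] at m6
        omega
    · rw [negsmul]
      constructor
      · refine circ_of_noTwo _ ?_
        intro i j h1 h2 h3 h4
        fin_cases i <;> fin_cases j <;>
          first
            | rfl
            | (exfalso;
               simp only [Fin.reduceFinMk, Fin.isValue, Fin.reduceAdd, mem0, mem1, mem2, mem3, mem4,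
                 mem5, mem6] at h1 h2 h3 h4;
               omega)
      · intro huniv
        have m4 : (4 : Fin 7) ∈ Nset ![-k,-c2,-c3,-k,-1] (x, y) := by
          rw [huniv]; exact Finset.mem_univ _
        have m6 : (6 : Fin 7) ∈ Nset ![-k,-c2,-c3,-k,-1] (x, y) := by
          rw [huniv]; exact Finset.mem_univ _
        rw [mem4] at m4
        rw [mem6] at m6
        omega
end
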